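/- arXiv:2012.08498 — 3 statements merged into one kernel-verified Lean document; each statement's English description precedes it below -/
import Mathlib

section
/- Let n ≥ 2 and let λ_1, λ_2, …, λ_n be pairwise distinct positive real numbers, and set ℓ_j = ∏_{i=1, i≠j}^n λ_i/(λ_i − λ_j) for j = 1,…,n. Then for every integer k with 1 ≤ k ≤ n − 1, ∑_{j=1}^n ℓ_j/λ_j^k ≥ ∑_{j=1}^n 1/λ_j^k, with equality if and only if k = 1. -/
open Finset

namespace LagAux

variable {ι : Type*} [DecidableEq ι]

/-- Divided-difference-like sum. -/
noncomputable def A (x : ι → ℝ) (s : Finset ι) (m : ℕ) : ℝ :=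
  ∑ j ∈ s, x j ^ m / ∏ i ∈ s.erase j, (x j - x i)

/-- Complete homogeneous symmetric function on the finset `s`. -/
noncomputable def H (x : ι → ℝ) (s : Finset ι) (d : ℕ) : ℝ :=
  ∑ c ∈ s.piAntidiag d, ∏ i ∈ s, x i ^ c i

lemma denom_ne_zero {x : ι → ℝ} {s : Finset ι} (hinj : Set.InjOn x s) {j : ι} (hj : j ∈ s) :
    ∏ i ∈ s.erase j, (x j - x i) ≠ 0 := by
  rw [Finset.prod_ne_zero_iff]
  intro i hi
  rw [Finset.mem_erase] at hi
  exact sub_ne_zero.2 fun h => hi.1 (hinj hi.2 hj h.symm)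

lemma decomp (x : ι → ℝ) (s : Finset ι) (hinj : Set.InjOn x s) {a : ι} (ha : a ∈ s) (m : ℕ) :
    A x s m = x a ^ m * A x s 0 +
      ∑ r ∈ Finset.range m, x a ^ (m - 1 - r) * A x (s.erase a) r := by
  have hinj' : Set.InjOn x (s.erase a) := hinj.mono (by simp [Finset.erase_subset])
  have key : ∀ j ∈ s.erase a,
      x j ^ m / ∏ i ∈ s.erase j, (x j - x i)
        = x a ^ m / ∏ i ∈ s.erase j, (x j - x i)
          + ∑ r ∈ Finset.range m,
              x a ^ (m - 1 - r) * (x j ^ r / ∏ i ∈ (s.erase a).erase j, (x j - x i)) := by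
    intro j hj
    have hj' : j ∈ s := Finset.mem_of_mem_erase hj
    have hja : j ≠ a := Finset.ne_of_mem_erase hj
    have hc : x j - x a ≠ 0 := sub_ne_zero.2 fun h => hja (hinj hj' ha h)
    have hD : ∏ i ∈ (s.erase a).erase j, (x j - x i) ≠ 0 := by
      have : j ∈ s.erase a := hj
      exact denom_ne_zero hinj' this
    have hsplit : ∏ i ∈ s.erase j, (x j - x i)
        = (x j - x a) * ∏ i ∈ (s.erase a).erase j, (x j - x i) := by
      rw [Finset.erase_right_comm]
      exact (Finset.mul_prod_erase _ _ (Finset.mem_erase.2 ⟨hja.symm, ha⟩)).symm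
    have hgeom : x j ^ m = x a ^ m +
        (∑ r ∈ Finset.range m, x a ^ (m - 1 - r) * x j ^ r) * (x j - x a) := by
      have h := geom_sum₂_mul (x j) (x a) m
      have hs : (∑ r ∈ Finset.range m, x a ^ (m - 1 - r) * x j ^ r)
          = ∑ i ∈ Finset.range m, x j ^ i * x a ^ (m - 1 - i) :=
        Finset.sum_congr rfl fun i _ => mul_comm _ _
      rw [hs]
      linarith [h]
    rw [hsplit, hgeom]
    rw [Finset.sum_congr rfl (fun r _ => (mul_div_assoc (x a ^ (m-1-r)) (x j ^ r) _).symm),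
      ← Finset.sum_div]
    field_simp
  -- split off the a-term
  rw [A, ← Finset.sum_erase_add _ _ ha, Finset.sum_congr rfl key]
  rw [Finset.sum_add_distrib]
  have hA0 : x a ^ m * A x s 0
      = (∑ j ∈ s.erase a, x a ^ m / ∏ i ∈ s.erase j, (x j - x i))
        + x a ^ m / ∏ i ∈ s.erase a, (x a - x i) := by
    rw [A, ← Finset.sum_erase_add _ _ ha]
    simp only [pow_zero, mul_add, Finset.mul_sum]
    rw [Finset.sum_congr rfl fun j _ => by rw [mul_one_div]]
    rw [mul_one_div]
  have hswap : ∑ j ∈ s.erase a, ∑ r ∈ Finset.range m,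
        x a ^ (m - 1 - r) * (x j ^ r / ∏ i ∈ (s.erase a).erase j, (x j - x i))
      = ∑ r ∈ Finset.range m, x a ^ (m - 1 - r) * A x (s.erase a) r := by
    rw [Finset.sum_comm]
    refine Finset.sum_congr rfl fun r _ => ?_
    rw [A, Finset.mul_sum]
  rw [hswap, hA0]
  ring

end LagAux

namespace LagAux
variable {ι : Type*} [DecidableEq ι]

lemma A_pair (x : ι → ℝ) {a b : ι} (hab : a ≠ b) (hx : x a ≠ x b) :
    A x {a, b} 0 = 0 := by
  have h1 : ({a, b} : Finset ι).erase a = {b} := by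
    rw [Finset.erase_insert (by simp [hab])]
  have h2 : ({a, b} : Finset ι).erase b = {a} := by
    rw [Finset.pair_comm, Finset.erase_insert (by simp [hab.symm])]
  rw [A, Finset.sum_pair hab, h1, h2]
  simp only [Finset.prod_singleton, pow_zero]
  rw [div_add_div _ _ (sub_ne_zero.2 hx) (sub_ne_zero.2 hx.symm)]
  rw [div_eq_zero_iff]
  left; ring

lemma A_zero_eq_zero (x : ι → ℝ) : ∀ n : ℕ, ∀ s : Finset ι, s.card = n →
    2 ≤ s.card → Set.InjOn x s → A x s 0 = 0 := by
  intro n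
  induction n using Nat.strong_induction_on with
  | _ n ih =>
    intro s hcard h2 hinj
    obtain ⟨a, ha, b, hb, hab⟩ := Finset.one_lt_card.1 h2
    rcases eq_or_lt_of_le h2 with h2' | h3
    · -- card = 2 : then s = {a, b}
      have hs : s = {a, b} := by
        apply Finset.eq_of_subset_of_card_le
        · intro c hc
          by_contra hcm
          simp only [Finset.mem_insert, Finset.mem_singleton, not_or] at hcm
          have : 2 < s.card := by
            refine Finset.two_lt_card.2 ⟨a, ha, b, hb, c, hc, hab, fun h => hcm.1 h.symm,
              fun h => hcm.2 h.symm⟩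
          omega
        · rw [← h2', Finset.card_pair hab]
      subst hs
      exact A_pair x hab (fun h => hab (hinj ha hb h))
    · -- card ≥ 3
      have hEa : ∀ c ∈ s, A x (s.erase c) 0 = 0 := by
        intro c hc
        refine ih (s.erase c).card (by rw [Finset.card_erase_of_mem hc]; omega) _ rfl
          (by rw [Finset.card_erase_of_mem hc]; omega)
          (hinj.mono (by simp [Finset.erase_subset]))
      have hda := decomp x s hinj ha 1
      have hdb := decomp x s hinj hb 1
      simp only [Finset.range_one, Finset.sum_singleton, pow_one, pow_zero, one_mul,
        Nat.sub_self, Nat.zero_sub] at hda hdb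
      rw [hEa a ha] at hda
      rw [hEa b hb] at hdb
      have hxab : x a ≠ x b := fun h => hab (hinj ha hb h)
      have : (x a - x b) * A x s 0 = 0 := by
        rw [hda] at hdb
        ring_nf
        ring_nf at hdb
        linarith [hdb]
      rcases mul_eq_zero.1 this with h | h
      · exact absurd (sub_eq_zero.1 h) hxab
      · exact h

lemma A_vanish (x : ι → ℝ) : ∀ m : ℕ, ∀ s : Finset ι, m + 2 ≤ s.card → Set.InjOn x s →
    A x s m = 0 := by
  intro m
  induction m using Nat.strong_induction_on with
  | _ m ih =>
    intro s hm hinj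
    rcases Nat.eq_zero_or_pos m with rfl | hmpos
    · exact A_zero_eq_zero x s.card s rfl hm hinj
    · obtain ⟨a, ha⟩ := Finset.card_pos.1 (by omega : 0 < s.card)
      rw [decomp x s hinj ha m, A_zero_eq_zero x s.card s rfl (by omega) hinj, mul_zero, zero_add]
      apply Finset.sum_eq_zero
      intro r hr
      rw [Finset.mem_range] at hr
      rw [ih r hr (s.erase a) (by rw [Finset.card_erase_of_mem ha]; omega)
        (hinj.mono (by simp [Finset.erase_subset]))]
      ring

end LagAux

namespace LagAux
variable {ι : Type*} [DecidableEq ι]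

lemma H_empty (x : ι → ℝ) (d : ℕ) : H x ∅ d = if d = 0 then 1 else 0 := by
  rw [H, Finset.piAntidiag_empty]
  split <;> simp

lemma H_zero (x : ι → ℝ) (s : Finset ι) : H x s 0 = 1 := by
  rw [H, Finset.piAntidiag_zero]
  simp

lemma H_cons (x : ι → ℝ) {a : ι} {s : Finset ι} (ha : a ∉ s) (d : ℕ) :
    H x (Finset.cons a s ha) d
      = ∑ p ∈ Finset.HasAntidiagonal.antidiagonal d, x a ^ p.1 * H x s p.2 := by
  rw [H, Finset.piAntidiag_cons ha d, Finset.sum_disjiUnion]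
  refine Finset.sum_congr rfl fun p _ => ?_
  rw [Finset.sum_map, H, Finset.mul_sum]
  refine Finset.sum_congr rfl fun c hc => ?_
  rw [Finset.mem_piAntidiag] at hc
  have hca : c a = 0 := by
    by_contra h
    exact ha (hc.2 a h)
  simp only [addRightEmbedding_apply, Pi.add_apply]
  rw [Finset.prod_cons]
  have hprod : (∏ i ∈ s, x i ^ (c i + if i = a then p.1 else 0)) = ∏ i ∈ s, x i ^ c i :=
    Finset.prod_congr rfl fun i hi => by
      rw [if_neg (fun h : i = a => ha (h ▸ hi)), add_zero]
  rw [hprod, hca, if_pos rfl, zero_add]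

lemma H_singleton (x : ι → ℝ) (a : ι) (d : ℕ) : H x {a} d = x a ^ d := by
  have : ({a} : Finset ι) = Finset.cons a ∅ (by simp) := by simp
  rw [this, H_cons]
  rw [Finset.Nat.sum_antidiagonal_eq_sum_range_succ (fun p q => x a ^ p * H x ∅ q)]
  rw [Finset.sum_range_succ]
  simp only [H_empty]
  rw [Nat.sub_self, if_pos rfl, mul_one]
  rw [Finset.sum_eq_zero, zero_add]
  intro r hr
  rw [Finset.mem_range] at hr
  rw [if_neg (by omega), mul_zero]

lemma H_one (x : ι → ℝ) (s : Finset ι) : H x s 1 = ∑ j ∈ s, x j := by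
  induction s using Finset.cons_induction with
  | empty => rw [H_empty]; simp
  | cons a s ha ih =>
    rw [H_cons, Finset.Nat.sum_antidiagonal_eq_sum_range_succ (fun p q => x a ^ p * H x s q)]
    rw [Finset.sum_range_succ, Finset.sum_range_one]
    simp only [pow_zero, pow_one, one_mul, Nat.sub_self, Nat.sub_zero, H_zero, mul_one]
    rw [ih, Finset.sum_cons]
    ring

lemma sum_range_split (f : ℕ → ℝ) (a : ℕ) : ∀ b : ℕ,
    ∑ r ∈ Finset.range (a + b), f r
      = ∑ r ∈ Finset.range a, f r + ∑ e ∈ Finset.range b, f (a + e) := by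
  intro b
  induction b with
  | zero => simp
  | succ b ih =>
    rw [← Nat.add_assoc, Finset.sum_range_succ, ih, Finset.sum_range_succ]
    ring

end LagAux

namespace LagAux
variable {ι : Type*} [DecidableEq ι]

lemma mainId (x : ι → ℝ) : ∀ s : Finset ι, s.Nonempty → Set.InjOn x s → ∀ d : ℕ,
    A x s (d + (s.card - 1)) = H x s d := by
  intro s
  induction s using Finset.cons_induction with
  | empty => intro h; exact absurd h (by simp)
  | cons a t ha ih =>
    intro _ hinj d
    rcases t.eq_empty_or_nonempty with rfl | htne
    · -- singleton
      simp only [Finset.cons_empty, Finset.card_singleton]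
      rw [H_singleton, A]
      simp
    · have hat : a ∈ Finset.cons a t ha := Finset.mem_cons_self a t
      have hinj' : Set.InjOn x t :=
        hinj.mono (by intro i hi; exact Finset.mem_cons_of_mem hi)
      have hc1 : 1 ≤ t.card := Finset.card_pos.2 htne
      have hcards : (Finset.cons a t ha).card = t.card + 1 := Finset.card_cons ha
      have hm : d + ((Finset.cons a t ha).card - 1) = d + t.card := by omega
      rw [hm, decomp x _ hinj hat]
      rw [A_zero_eq_zero x _ _ rfl (by omega) hinj, mul_zero, zero_add]
      rw [Finset.erase_cons]
      have hsplit : (d + t.card) = (t.card - 1) + (d + 1) := by omega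
      rw [hsplit, sum_range_split]
      have hfirst : ∑ r ∈ Finset.range (t.card - 1),
          x a ^ ((t.card - 1) + (d + 1) - 1 - r) * A x t r = 0 := by
        apply Finset.sum_eq_zero
        intro r hr
        rw [Finset.mem_range] at hr
        rw [A_vanish x r t (by omega) hinj', mul_zero]
      rw [hfirst, zero_add]
      have hsecond : ∑ e ∈ Finset.range (d + 1),
          x a ^ ((t.card - 1) + (d + 1) - 1 - ((t.card - 1) + e)) * A x t ((t.card - 1) + e)
            = ∑ e ∈ Finset.range (d + 1), x a ^ (d - e) * H x t e := by
        refine Finset.sum_congr rfl fun e he => ?_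
        rw [Finset.mem_range] at he
        have h1 : (t.card - 1) + (d + 1) - 1 - ((t.card - 1) + e) = d - e := by omega
        have h2 : (t.card - 1) + e = e + (t.card - 1) := by omega
        rw [h1, h2, ih htne hinj' e]
      rw [hsecond, H_cons]
      rw [Finset.Nat.sum_antidiagonal_eq_sum_range_succ (fun p q => x a ^ p * H x t q)]
      rw [← Finset.sum_range_reflect]
      refine Finset.sum_congr rfl fun e he => ?_
      rw [Finset.mem_range] at he
      have h3 : d + 1 - 1 - e = d - e := by omega
      have h4 : d - (d - e) = e := by omega
      rw [h3, h4]

end LagAux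

namespace LagAux
variable {ι : Type*} [DecidableEq ι]

noncomputable local instance instDecEqFn : DecidableEq (ι → ℕ) := Classical.decEq _

omit [DecidableEq ι] in
lemma term_pos {x : ι → ℝ} {s : Finset ι} (hpos : ∀ i ∈ s, 0 < x i) (c : ι → ℕ) :
    0 < ∏ i ∈ s, x i ^ c i :=
  Finset.prod_pos fun i hi => pow_pos (hpos i hi) _

lemma diag_subset (x : ι → ℝ) (s : Finset ι) {k : ℕ} (hk : 1 ≤ k) :
    s.image (fun j => fun i => if i = j then k else 0) ⊆ s.piAntidiag k := by
  intro c hc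
  rw [Finset.mem_image] at hc
  obtain ⟨j, hj, rfl⟩ := hc
  rw [Finset.mem_piAntidiag]
  constructor
  · rw [Finset.sum_ite_eq' s j (fun _ => k), if_pos hj]
  · intro i hi
    rcases eq_or_ne i j with rfl | h
    · exact hj
    · exact absurd (if_neg h) hi

lemma diag_sum (x : ι → ℝ) (s : Finset ι) {k : ℕ} (hk : 1 ≤ k) :
    ∑ c ∈ s.image (fun j => fun i => if i = j then k else 0), ∏ i ∈ s, x i ^ c i
      = ∑ j ∈ s, x j ^ k := by
  rw [Finset.sum_image]
  · refine Finset.sum_congr rfl fun j hj => ?_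
    have : ∀ i ∈ s, x i ^ (if i = j then k else 0) = if i = j then x i ^ k else 1 := by
      intro i _
      split <;> simp
    rw [Finset.prod_congr rfl this, Finset.prod_ite_eq' s j (fun i => x i ^ k), if_pos hj]
  · intro a ha b hb hfe
    by_contra hab
    have h2 := congrFun hfe a
    simp [hab] at h2
    omega

lemma H_ge (x : ι → ℝ) (s : Finset ι) (hpos : ∀ i ∈ s, 0 < x i) {k : ℕ} (hk : 1 ≤ k) :
    ∑ j ∈ s, x j ^ k ≤ H x s k := by
  rw [← diag_sum x s hk, H]
  exact Finset.sum_le_sum_of_subset_of_nonneg (diag_subset x s hk)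
    fun c hc _ => le_of_lt (term_pos hpos c)

lemma H_gt (x : ι → ℝ) (s : Finset ι) (hpos : ∀ i ∈ s, 0 < x i) {k : ℕ} (hk : 2 ≤ k)
    (hs : 2 ≤ s.card) : ∑ j ∈ s, x j ^ k < H x s k := by
  obtain ⟨j0, hj0, j1, hj1, hj⟩ := Finset.one_lt_card.1 hs
  rw [← diag_sum x s (by omega), H]
  set cstar : ι → ℕ := Pi.single j0 (k - 1) + Pi.single j1 1 with hcstar
  refine Finset.sum_lt_sum_of_subset (diag_subset x s (by omega)) (i := cstar) ?_ ?_
    (term_pos hpos cstar) fun c hc _ => le_of_lt (term_pos hpos c)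
  · rw [Finset.mem_piAntidiag]
    constructor
    · show ∑ i ∈ s, cstar i = k
      simp only [hcstar, Pi.add_apply]
      rw [Finset.sum_add_distrib, Finset.sum_pi_single' j0 (k-1) s,
        Finset.sum_pi_single' j1 1 s, if_pos hj0, if_pos hj1]
      omega
    · intro i hi
      rcases eq_or_ne i j0 with rfl | h0
      · exact hj0
      rcases eq_or_ne i j1 with rfl | h1
      · exact hj1
      exfalso
      apply hi
      simp [hcstar, Pi.single_eq_of_ne h0, Pi.single_eq_of_ne h1]
  · intro hmem
    rw [Finset.mem_image] at hmem
    obtain ⟨j, hjs, hje⟩ := hmem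
    have h0 := congrFun hje j0
    have h1 := congrFun hje j1
    simp only [hcstar, Pi.add_apply, Pi.single_eq_same, Pi.single_eq_of_ne hj,
      Pi.single_eq_of_ne hj.symm] at h0 h1
    rcases eq_or_ne j0 j with rfl | hne
    · rw [if_pos rfl] at h0
      omega
    · rw [if_neg hne] at h0
      omega

end LagAux

open LagAux

/-- **Lemma 2(iii)**. For pairwise distinct positive reals `λ₁, …, λₙ` (`n ≥ 2`) with Lagrange
weights `ℓⱼ = ∏_{i ≠ j} λᵢ/(λᵢ - λⱼ)`, for every integer `k` with `1 ≤ k ≤ n - 1` one has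
`∑_{j=1}^n ℓⱼ/λⱼᵏ ≥ ∑_{j=1}^n 1/λⱼᵏ`, with equality if and only if `k = 1`. -/
theorem sum_lagrange_weights_inv_pow_ge
    (n : ℕ) (hn : 2 ≤ n) (l : Fin n → ℝ) (hpos : ∀ i, 0 < l i)
    (hdist : ∀ i j, i ≠ j → l i ≠ l j)
    (k : ℕ) (hk1 : 1 ≤ k) (hk2 : k ≤ n - 1) :
    (∑ j, (∏ i ∈ univ.erase j, l i / (l i - l j)) / l j ^ k ≥ ∑ j, 1 / l j ^ k) ∧
      ((∑ j, (∏ i ∈ univ.erase j, l i / (l i - l j)) / l j ^ k = ∑ j, 1 / l j ^ k) ↔ k = 1) := by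
  set x : Fin n → ℝ := fun i => (l i)⁻¹ with hx
  have hxpos : ∀ i, 0 < x i := fun i => inv_pos.2 (hpos i)
  have hinj : Set.InjOn x (Finset.univ : Finset (Fin n)) := by
    intro i _ j _ h
    by_contra hne
    exact hdist i j hne (inv_injective h)
  -- rewrite the left sum
  have hterm : ∀ j : Fin n, (∏ i ∈ univ.erase j, l i / (l i - l j)) / l j ^ k
      = x j ^ (k + (n - 1)) / ∏ i ∈ univ.erase j, (x j - x i) := by
    intro j
    have hfac : ∀ i ∈ univ.erase j, l i / (l i - l j) = x j / (x j - x i) := by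
      intro i hi
      have hij : i ≠ j := Finset.ne_of_mem_erase hi
      have hl : l i - l j ≠ 0 := sub_ne_zero.2 (hdist i j hij)
      have hxij : x j - x i ≠ 0 := sub_ne_zero.2 fun h =>
        hij (hinj (Finset.mem_univ i) (Finset.mem_univ j) h.symm)
      rw [div_eq_div_iff hl hxij, hx]
      field_simp [(hpos i).ne', (hpos j).ne']
    rw [Finset.prod_congr rfl hfac, Finset.prod_div_distrib, Finset.prod_const]
    have hcard : (univ.erase j).card = n - 1 := by
      rw [Finset.card_erase_of_mem (Finset.mem_univ j), Finset.card_univ, Fintype.card_fin]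
    rw [hcard]
    rw [show l j ^ k = (x j ^ k)⁻¹ by rw [hx]; simp [inv_pow]]
    rw [div_inv_eq_mul, pow_add, div_mul_eq_mul_div, mul_comm (x j ^ (n-1)) (x j ^ k)]
  have hune : (Finset.univ : Finset (Fin n)).Nonempty :=
    Finset.card_pos.1 (by rw [Finset.card_univ, Fintype.card_fin]; omega)
  have hcardu : (Finset.univ : Finset (Fin n)).card = n := by
    rw [Finset.card_univ, Fintype.card_fin]
  have hL : ∑ j, (∏ i ∈ univ.erase j, l i / (l i - l j)) / l j ^ k = H x univ k := by
    rw [Finset.sum_congr rfl (fun j _ => hterm j)]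
    have hmain := mainId x univ hune hinj k
    rw [hcardu] at hmain
    exact hmain
  have hR : ∑ j, 1 / (l j : ℝ) ^ k = ∑ j, x j ^ k := by
    refine Finset.sum_congr rfl fun j _ => ?_
    rw [one_div, hx, ← inv_pow]
  rw [hL, hR]
  constructor
  · exact H_ge x univ (fun i _ => hxpos i) hk1
  · constructor
    · intro he
      by_contra hne
      have hgt := H_gt x univ (fun i _ => hxpos i) (k := k) (by omega) (by omega)
      linarith
    · rintro rfl
      rw [H_one]
      simp [pow_one]
end

section
/- Let n ≥ 2 and let λ_1, λ_2, …, λ_n be pairwise distinct positive real numbers, and set ℓ_j = ∏_{i=1, i≠j}^n λ_i/(λ_i − λ_j) for j = 1,…,n. Then for every integer k ≥ 1, ∑_{j=1}^n ℓ_j/λ_j^k = ∑_{α_1+⋯+α_n = k} 1/(λ_1^{α_1} λ_2^{α_2} ⋯ λ_n^{α_n}), where the sum on the right is over all n-tuples (α_1, …, α_n) of non-negative integers with α_1 + ⋯ + α_n = k (i.e., the complete homogeneous symmetric polynomial of degree k evaluated at 1/λ_1, …, 1/λ_n). -/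
open Finset Polynomial

/-- Splitting a product over `univ.erase j.succ` in `Fin (n+1)`. -/
lemma prod_erase_succ_aux {M : Type*} [CommMonoid M] {n : ℕ} (g : Fin (n + 1) → M) (j : Fin n) :
    ∏ i ∈ univ.erase j.succ, g i = g 0 * ∏ i ∈ univ.erase j, g i.succ := by
  have h : univ.erase (Fin.succ j)
      = insert 0 ((univ.erase j).map ⟨Fin.succ, Fin.succ_injective n⟩) := by
    ext i
    rcases Fin.eq_zero_or_eq_succ i with rfl | ⟨i', rfl⟩
    · simp [(Fin.succ_ne_zero j).symm]
    · simp [Fin.succ_inj, (Fin.succ_ne_zero i').symm, Fin.succ_ne_zero, (Fin.succ_injective n).eq_iff]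
  rw [h, prod_insert, prod_map]
  · rfl
  · simp [(Fin.succ_ne_zero _).symm]

/-- The divided difference of `x ^ m` over `N` points vanishes when `m + 1 < N`. -/
lemma divided_diff_pow_zero {N : ℕ} (v : Fin N → ℝ) (hv : Function.Injective v) {m : ℕ}
    (hm : m + 1 < N) :
    ∑ j, v j ^ m / ∏ i ∈ univ.erase j, (v j - v i) = 0 := by
  have hvs : Set.InjOn v (univ : Finset (Fin N)) := fun a _ b _ h => hv h
  have hcard : #(univ : Finset (Fin N)) = N := by simp
  have hdeg : (X ^ m : ℝ[X]).degree < #(univ : Finset (Fin N)) := by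
    rw [hcard, Polynomial.degree_X_pow]
    exact_mod_cast Nat.lt_of_succ_lt hm
  have h := Lagrange.eq_interpolate hvs hdeg
  have hb : ∀ j : Fin N, (Lagrange.basis univ v j).coeff (N - 1)
      = (∏ i ∈ univ.erase j, (v j - v i))⁻¹ := by
    intro j
    have hnd : (Lagrange.basis univ v j).natDegree = N - 1 := by
      rw [Lagrange.natDegree_basis hvs (mem_univ j), hcard]
    rw [← hnd, Polynomial.coeff_natDegree, Lagrange.basis, Polynomial.leadingCoeff_prod,
      ← Finset.prod_inv_distrib]
    refine Finset.prod_congr rfl fun i hi => ?_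
    rw [Lagrange.basisDivisor, leadingCoeff_mul, leadingCoeff_C,
      (monic_X_sub_C (v i)).leadingCoeff, mul_one]
  have hc := congrArg (fun p : ℝ[X] => p.coeff (N - 1)) h
  simp only [Lagrange.interpolate_apply, Polynomial.finset_sum_coeff,
    Polynomial.coeff_C_mul, Polynomial.eval_pow, Polynomial.eval_X,
    Polynomial.coeff_X_pow] at hc
  have hm' : ¬ (N - 1 = m) := by omega
  rw [if_neg hm'] at hc
  have hrw : ∑ j, v j ^ m / ∏ i ∈ univ.erase j, (v j - v i)
      = ∑ j, v j ^ m * (Lagrange.basis univ v j).coeff (N - 1) := by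
    refine Finset.sum_congr rfl fun j _ => ?_
    rw [hb j, div_eq_mul_inv]
  rw [hrw, ← hc]

/-- Splitting a sum over `antidiagonalTuple (n+1) k` along the first coordinate. -/
lemma sum_antidiagonalTuple_succ {M : Type*} [AddCommMonoid M] (n k : ℕ)
    (f : (Fin (n + 1) → ℕ) → M) :
    ∑ α ∈ Finset.Nat.antidiagonalTuple (n + 1) k, f α =
      ∑ p ∈ Finset.HasAntidiagonal.antidiagonal k,
        ∑ β ∈ Finset.Nat.antidiagonalTuple n p.2, f (Fin.cons p.1 β) := by
  rw [Finset.sum_sigma']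
  refine Finset.sum_nbij'
    (i := fun α : Fin (n + 1) → ℕ =>
      (⟨(α 0, ∑ i : Fin n, α i.succ), Fin.tail α⟩ : (_ : ℕ × ℕ) × (Fin n → ℕ)))
    (j := fun x : (_ : ℕ × ℕ) × (Fin n → ℕ) => Fin.cons x.1.1 x.2) ?_ ?_ ?_ ?_ ?_
  · intro α hα
    rw [Finset.Nat.mem_antidiagonalTuple] at hα
    simp only [Finset.mem_sigma, Finset.HasAntidiagonal.mem_antidiagonal, Finset.Nat.mem_antidiagonalTuple]
    refine ⟨?_, rfl⟩
    rw [← hα, Fin.sum_univ_succ]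
  · intro x hx
    simp only [Finset.mem_sigma, Finset.HasAntidiagonal.mem_antidiagonal,
      Finset.Nat.mem_antidiagonalTuple] at hx ⊢
    rw [Fin.sum_univ_succ]
    simp only [Fin.cons_zero, Fin.cons_succ]
    rw [hx.2, hx.1]
  · intro α _
    exact Fin.cons_self_tail α
  · intro x hx
    simp only [Finset.mem_sigma, Finset.HasAntidiagonal.mem_antidiagonal,
      Finset.Nat.mem_antidiagonalTuple] at hx
    refine Sigma.ext ?_ (by simp [Fin.tail_cons])
    simp only [Fin.cons_zero, Fin.cons_succ]
    rw [hx.2]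
  · intro α _
    rw [Fin.cons_self_tail]

/-- Key induction: divided differences of powers give complete homogeneous symmetric sums. -/
lemma divided_diff_pow_eq_hsym (n : ℕ) :
    ∀ v : Fin (n + 1) → ℝ, Function.Injective v → ∀ k : ℕ,
    ∑ j, v j ^ (k + n) / ∏ i ∈ univ.erase j, (v j - v i) =
      ∑ α ∈ Finset.Nat.antidiagonalTuple (n + 1) k, ∏ i, v i ^ α i := by
  induction n with
  | zero =>
    intro v hv k
    simp [Finset.Nat.antidiagonalTuple_one, Fin.prod_univ_succ]
  | succ n ih =>
    intro v hv k
    have hwinj : Function.Injective (fun i : Fin (n + 1) => v i.succ) := by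
      intro a b h
      exact Fin.succ_injective (n + 1) (hv h)
    have hP : ∀ j' : Fin (n + 1), (∏ i ∈ univ.erase j', (v j'.succ - v i.succ)) ≠ 0 := by
      intro j'
      rw [Finset.prod_ne_zero_iff]
      intro i hi
      exact sub_ne_zero.mpr fun h => (mem_erase.mp hi).1 (Fin.succ_injective (n + 1) (hv h)).symm
    have hD : ∀ j' : Fin (n + 1), ∏ i ∈ univ.erase j'.succ, (v j'.succ - v i)
        = (v j'.succ - v 0) * ∏ i ∈ univ.erase j', (v j'.succ - v i.succ) := by
      intro j'
      rw [prod_erase_succ_aux (fun i => v j'.succ - v i) j']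
    have hzero := divided_diff_pow_zero v hv (m := n) (by omega)
    rw [Fin.sum_univ_succ] at hzero
    rw [sum_antidiagonalTuple_succ]
    have ihw := ih (fun i => v i.succ) hwinj
    have hRHS : ∀ p : ℕ × ℕ, ∑ β ∈ Finset.Nat.antidiagonalTuple (n + 1) p.2,
          ∏ i, v i ^ (Fin.cons p.1 β : Fin (n + 2) → ℕ) i
        = ∑ j' : Fin (n + 1), v 0 ^ p.1 *
            (v j'.succ ^ (p.2 + n) / ∏ i ∈ univ.erase j', (v j'.succ - v i.succ)) := by
      intro p
      calc ∑ β ∈ Finset.Nat.antidiagonalTuple (n + 1) p.2,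
            ∏ i, v i ^ (Fin.cons p.1 β : Fin (n + 2) → ℕ) i
          = ∑ β ∈ Finset.Nat.antidiagonalTuple (n + 1) p.2,
              v 0 ^ p.1 * ∏ i', v i'.succ ^ β i' := by
            refine Finset.sum_congr rfl fun β _ => ?_
            rw [Fin.prod_univ_succ]
            simp
        _ = v 0 ^ p.1 * ∑ β ∈ Finset.Nat.antidiagonalTuple (n + 1) p.2,
              ∏ i', v i'.succ ^ β i' := by rw [Finset.mul_sum]
        _ = v 0 ^ p.1 * ∑ j' : Fin (n + 1),
              v j'.succ ^ (p.2 + n) / ∏ i ∈ univ.erase j', (v j'.succ - v i.succ) := by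
            rw [← ihw p.2]
        _ = _ := by rw [Finset.mul_sum]
    have hstep : ∑ p ∈ Finset.HasAntidiagonal.antidiagonal k,
          ∑ β ∈ Finset.Nat.antidiagonalTuple (n + 1) p.2,
            ∏ i, v i ^ (Fin.cons p.1 β : Fin (n + 2) → ℕ) i
        = ∑ j' : Fin (n + 1),
            (v j'.succ ^ (k + (n + 1)) / ∏ i ∈ univ.erase j'.succ, (v j'.succ - v i)
              - v 0 ^ (k + 1) *
                  (v j'.succ ^ n / ∏ i ∈ univ.erase j'.succ, (v j'.succ - v i))) := by
      rw [Finset.sum_congr rfl fun p _ => hRHS p, Finset.sum_comm]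
      refine Finset.sum_congr rfl fun j' _ => ?_
      have hba : v j'.succ - v 0 ≠ 0 := sub_ne_zero.mpr fun h => Fin.succ_ne_zero j' (hv h)
      have hgeo : ∑ p ∈ Finset.HasAntidiagonal.antidiagonal k, v 0 ^ p.1 * v j'.succ ^ p.2
          = (v j'.succ ^ (k + 1) - v 0 ^ (k + 1)) / (v j'.succ - v 0) := by
        rw [eq_div_iff hba, Finset.Nat.sum_antidiagonal_eq_sum_range_succ_mk]
        have h2 := geom_sum₂_mul (v 0) (v j'.succ) (k + 1)
        simp only [Nat.add_sub_cancel] at h2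
        linear_combination -h2
      calc ∑ p ∈ Finset.HasAntidiagonal.antidiagonal k, v 0 ^ p.1 *
            (v j'.succ ^ (p.2 + n) / ∏ i ∈ univ.erase j', (v j'.succ - v i.succ))
          = (∑ p ∈ Finset.HasAntidiagonal.antidiagonal k, v 0 ^ p.1 * v j'.succ ^ p.2) *
              (v j'.succ ^ n / ∏ i ∈ univ.erase j', (v j'.succ - v i.succ)) := by
            rw [Finset.sum_mul]
            refine Finset.sum_congr rfl fun p _ => ?_
            rw [pow_add]
            ring
        _ = (v j'.succ ^ (k + 1) - v 0 ^ (k + 1)) / (v j'.succ - v 0) *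
              (v j'.succ ^ n / ∏ i ∈ univ.erase j', (v j'.succ - v i.succ)) := by rw [hgeo]
        _ = _ := by
            rw [hD j']
            field_simp
            ring
    rw [hstep, Finset.sum_sub_distrib, ← Finset.mul_sum, Fin.sum_univ_succ
      (f := fun j => v j ^ (k + (n + 1)) / ∏ i ∈ univ.erase j, (v j - v i))]
    linear_combination (v 0 ^ (k + 1)) * hzero

/-- For pairwise distinct positive reals `λ₁, …, λₙ` (`n ≥ 2`) with Lagrange weights
`ℓⱼ = ∏_{i ≠ j} λᵢ/(λᵢ - λⱼ)`, for every integer `k ≥ 1` one has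
`∑_{j=1}^n ℓⱼ/λⱼᵏ = ∑_{|α| = k} 1/(λ₁^{α₁} ⋯ λₙ^{αₙ})`, the sum on the right being over all
multi-indices `α = (α₁, …, αₙ)` of non-negative integers with `α₁ + ⋯ + αₙ = k` (the complete
homogeneous symmetric polynomial of degree `k` evaluated at `1/λ₁, …, 1/λₙ`). -/
theorem sum_lagrange_weights_inv_pow_eq_hsym
    (n : ℕ) (hn : 2 ≤ n) (l : Fin n → ℝ) (hpos : ∀ i, 0 < l i)
    (hdist : ∀ i j, i ≠ j → l i ≠ l j)
    (k : ℕ) (hk : 1 ≤ k) :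
    ∑ j, (∏ i ∈ univ.erase j, l i / (l i - l j)) / l j ^ k =
      ∑ α ∈ Finset.Nat.antidiagonalTuple n k, ∏ i, 1 / l i ^ (α i) := by
  obtain ⟨m, rfl⟩ : ∃ m, n = m + 1 := ⟨n - 1, by omega⟩
  set v : Fin (m + 1) → ℝ := fun i => (l i)⁻¹ with hv
  have hl0 : ∀ i, l i ≠ 0 := fun i => (hpos i).ne'
  have hvinj : Function.Injective v := by
    intro a b h
    by_contra hab
    exact hdist a b hab (inv_injective h)
  have key := divided_diff_pow_eq_hsym m v hvinj k
  calc ∑ j, (∏ i ∈ univ.erase j, l i / (l i - l j)) / l j ^ k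
      = ∑ j, v j ^ (k + m) / ∏ i ∈ univ.erase j, (v j - v i) := by
        refine Finset.sum_congr rfl fun j _ => ?_
        have hi0 : l j ≠ 0 := hl0 j
        have hprod : ∀ i ∈ univ.erase j, l i / (l i - l j) = v j / (v j - v i) := by
          intro i hi
          have hne : l i ≠ l j := hdist i j (mem_erase.mp hi).1
          have hsub : l i - l j ≠ 0 := sub_ne_zero.mpr hne
          have hi0' : l i ≠ 0 := hl0 i
          have hvne : (l j)⁻¹ - (l i)⁻¹ ≠ 0 :=
            sub_ne_zero.mpr fun h => hne (inv_injective h).symm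
          show l i / (l i - l j) = (l j)⁻¹ / ((l j)⁻¹ - (l i)⁻¹)
          rw [div_eq_div_iff hsub hvne]
          field_simp
        rw [Finset.prod_congr rfl hprod, Finset.prod_div_distrib, Finset.prod_const,
          Finset.card_erase_of_mem (mem_univ j), Finset.card_univ, Fintype.card_fin]
        have hP : (∏ i ∈ univ.erase j, (v j - v i)) ≠ 0 := by
          rw [Finset.prod_ne_zero_iff]
          intro i hi
          exact sub_ne_zero.mpr fun h => (mem_erase.mp hi).1 (hvinj h).symm
        have hljk : l j ^ k ≠ 0 := pow_ne_zero _ hi0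
        have hvk : v j ^ k = (l j ^ k)⁻¹ := by
          rw [hv]
          simp [inv_pow]
        rw [div_div, pow_add, hvk, div_eq_div_iff (mul_ne_zero hP hljk) hP]
        field_simp
        ring
        simp
    _ = ∑ α ∈ Finset.Nat.antidiagonalTuple (m + 1) k, ∏ i, v i ^ α i := key
    _ = _ := by
        refine Finset.sum_congr rfl fun α _ => Finset.prod_congr rfl fun i _ => ?_
        rw [hv]
        simp [one_div, inv_pow]
end

section
/- Let n ≥ 2 and let μ_1 > μ_2 > … > μ_n > 0 be pairwise distinct positive real numbers with Lagrange weights ℓ_j = ∏_{i=1, i≠j}^n μ_j/(μ_j − μ_i). Let ψ(t) = ∑_{k=0}^∞ a_k t^k be a power series convergent in a neighborhood of t = 0 with a_0 = 1 and a_1 > 0. If the identity 1 = ∑_{j=1}^n ℓ_j ∏_{i=1, i≠j}^n ψ(μ_i t) holds for all t in a neighborhood of 0, then a_k = 0 for all k ≥ 2; that is, ψ(t) = 1 + a_1 t. -/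
open Finset Filter Topology

/-- Complete homogeneous symmetric function of a list of reals. -/
def Hh : List ℝ → ℕ → ℝ
  | [], 0 => 1
  | [], _+1 => 0
  | c :: L, m => ∑ d ∈ Finset.range (m+1), c^d * Hh L (m - d)

lemma Hh_cons (c : ℝ) (L : List ℝ) (m : ℕ) :
    Hh (c :: L) m = ∑ d ∈ Finset.range (m+1), c^d * Hh L (m - d) := rfl

lemma Hh_zero (L : List ℝ) : Hh L 0 = 1 := by
  induction L with
  | nil => rfl
  | cons c L ih => simp [Hh_cons, ih]

lemma Hh_nonneg {L : List ℝ} (hL : ∀ c ∈ L, 0 ≤ c) (m : ℕ) : 0 ≤ Hh L m := by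
  induction L generalizing m with
  | nil => cases m <;> simp [Hh]
  | cons c L ih =>
      rw [Hh_cons]
      refine Finset.sum_nonneg fun d _ => mul_nonneg (pow_nonneg (hL c (by simp)) d)
        (ih (fun x hx => hL x (by simp [hx])) _)

lemma Hh_pos {L : List ℝ} (hL : ∀ c ∈ L, 0 < c) (hne : L ≠ []) (m : ℕ) : 0 < Hh L m := by
  cases L with
  | nil => exact absurd rfl hne
  | cons c L =>
      rw [Hh_cons]
      have hle : c ^ m * Hh L (m - m) ≤ ∑ d ∈ Finset.range (m+1), c^d * Hh L (m - d) :=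
        Finset.single_le_sum (f := fun d => c^d * Hh L (m - d))
          (fun d _ => mul_nonneg (pow_nonneg (hL c (by simp)).le d)
            (Hh_nonneg (fun x hx => (hL x (List.mem_cons_of_mem _ hx)).le) _))
          (Finset.self_mem_range_succ m)
      rw [Nat.sub_self, Hh_zero, mul_one] at hle
      exact lt_of_lt_of_le (pow_pos (hL c (by simp)) m) hle

lemma Hh_ge_sum_pow {L : List ℝ} (hL : ∀ c ∈ L, 0 < c) {m : ℕ} (hm : 1 ≤ m) :
    (L.map (· ^ m)).sum ≤ Hh L m := by
  induction L with
  | nil =>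
      cases m with
      | zero => omega
      | succ m => simp [Hh]
  | cons c L ih =>
      rw [Hh_cons, List.map_cons, List.sum_cons]
      have hsub : ({0, m} : Finset ℕ) ⊆ Finset.range (m+1) := by
        intro d hd; simp at hd ⊢; omega
      have h2 : ∑ d ∈ ({0, m} : Finset ℕ), c^d * Hh L (m - d)
          ≤ ∑ d ∈ Finset.range (m+1), c^d * Hh L (m - d) := by
        refine Finset.sum_le_sum_of_subset_of_nonneg hsub fun d _ _ =>
          mul_nonneg (pow_nonneg (hL c (by simp)).le d)
            (Hh_nonneg (fun x hx => (hL x (List.mem_cons_of_mem _ hx)).le) _)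
      have h0m : (0:ℕ) ≠ m := by omega
      rw [Finset.sum_pair h0m] at h2
      simp only [pow_zero, one_mul, Nat.sub_zero, Nat.sub_self, Hh_zero, mul_one] at h2
      have := ih (fun x hx => hL x (List.mem_cons_of_mem _ hx))
      linarith

lemma Hh_gt_sum_pow {c : ℝ} {L : List ℝ} (hL : ∀ x ∈ c :: L, 0 < x) (hne : L ≠ [])
    {m : ℕ} (hm : 2 ≤ m) :
    ((c :: L).map (· ^ m)).sum < Hh (c :: L) m := by
  have hc : 0 < c := hL c (by simp)
  have hLpos : ∀ x ∈ L, 0 < x := fun x hx => hL x (List.mem_cons_of_mem _ hx)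
  rw [Hh_cons, List.map_cons, List.sum_cons]
  have hsub : ({0, 1, m} : Finset ℕ) ⊆ Finset.range (m+1) := by
    intro d hd; simp at hd ⊢; omega
  have h2 : ∑ d ∈ ({0, 1, m} : Finset ℕ), c^d * Hh L (m - d)
      ≤ ∑ d ∈ Finset.range (m+1), c^d * Hh L (m - d) := by
    refine Finset.sum_le_sum_of_subset_of_nonneg hsub fun d _ _ =>
      mul_nonneg (pow_nonneg hc.le d) (Hh_nonneg (fun x hx => (hLpos x hx).le) _)
  have hne01m : ∑ d ∈ ({0, 1, m} : Finset ℕ), c^d * Hh L (m - d)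
      = Hh L m + c * Hh L (m-1) + c^m := by
    rw [show ({0, 1, m} : Finset ℕ) = insert 0 (insert 1 {m}) from rfl]
    rw [Finset.sum_insert (by simp; omega), Finset.sum_insert (by simp; omega),
      Finset.sum_singleton]
    simp [Hh_zero]
    ring
  have hmid : 0 < c * Hh L (m-1) := mul_pos hc (Hh_pos hLpos hne _)
  have hge := Hh_ge_sum_pow hLpos (m := m) (by omega)
  rw [hne01m] at h2
  linarith

lemma hasSum_Hh {L : List ℝ} (hL : ∀ c ∈ L, 0 < c) {x : ℝ} (hx : 0 ≤ x)
    (hx2 : ∀ c ∈ L, c * x < 1) :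
    HasSum (fun m => Hh L m * x ^ m) (L.map (fun c => (1 - c * x)⁻¹)).prod := by
  induction L with
  | nil =>
      simp only [List.map_nil, List.prod_nil]
      have : ∀ m : ℕ, m ∉ ({0} : Finset ℕ) → Hh [] m * x ^ m = 0 := by
        intro m hm
        cases m with
        | zero => simp at hm
        | succ m => simp [Hh]
      simpa [Hh] using (hasSum_sum_of_ne_finset_zero this : HasSum (fun m => Hh [] m * x ^ m) _)
  | cons c L ih =>
      have hc : 0 < c := hL c (by simp)
      have hcx : c * x < 1 := hx2 c (by simp)
      have hcx0 : 0 ≤ c * x := mul_nonneg hc.le hx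
      have hLpos : ∀ y ∈ L, 0 < y := fun y hy => hL y (List.mem_cons_of_mem _ hy)
      have hgeo : HasSum (fun m => (c * x) ^ m) (1 - c * x)⁻¹ :=
        hasSum_geometric_of_lt_one hcx0 hcx
      have hIH := ih hLpos (fun y hy => hx2 y (List.mem_cons_of_mem _ hy))
      -- absolute summability
      have hf : Summable fun m => ‖(c * x) ^ m‖ := by
        refine Summable.congr hgeo.summable ?_
        intro m
        rw [Real.norm_of_nonneg (pow_nonneg hcx0 m)]
      have hg : Summable fun m => ‖Hh L m * x ^ m‖ := by
        refine Summable.congr hIH.summable ?_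
        intro m
        rw [Real.norm_of_nonneg (mul_nonneg (Hh_nonneg (fun y hy => (hLpos y hy).le) m)
          (pow_nonneg hx m))]
      have hmul := hasSum_sum_range_mul_of_summable_norm hf hg
      rw [hgeo.tsum_eq, hIH.tsum_eq] at hmul
      rw [List.map_cons, List.prod_cons]
      refine HasSum.congr_fun hmul ?_
      intro m
      rw [Hh_cons, Finset.sum_mul]
      refine Finset.sum_congr rfl fun k hk => ?_
      have hkm : k ≤ m := by simp at hk; omega
      rw [mul_pow]
      have : x ^ k * x ^ (m - k) = x ^ m := by
        rw [← pow_add, Nat.add_sub_cancel' hkm]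
      calc c ^ k * Hh L (m - k) * x ^ m = c ^ k * Hh L (m - k) * (x ^ k * x ^ (m - k)) := by
            rw [this]
        _ = c ^ k * x ^ k * (Hh L (m - k) * x ^ (m - k)) := by ring

set_option maxHeartbeats 1000000 in
lemma coeff_tendsto {c : ℕ → ℝ} {f : ℝ → ℝ} {δ : ℝ} (hδ : 0 < δ)
    (h : ∀ t ∈ Set.Ioo (0:ℝ) δ, HasSum (fun m => c m * t ^ m) (f t))
    (k : ℕ) (hc : ∀ m < k, c m = 0) :
    Tendsto (fun t => f t / t ^ k) (𝓝[>] (0:ℝ)) (𝓝 (c k)) := by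
  obtain ⟨ρ, hρ, hρδ⟩ : ∃ ρ : ℝ, 0 < ρ ∧ ρ < δ := ⟨δ/2, by positivity, by linarith⟩
  -- coefficient bound
  have hsum_ρ := h ρ ⟨hρ, hρδ⟩
  have htend : Tendsto (fun m => |c m * ρ ^ m|) atTop (𝓝 0) := by
    simpa using (hsum_ρ.summable.tendsto_atTop_zero.abs)
  obtain ⟨C, hC⟩ := htend.bddAbove_range
  set C' := |C| + 1 with hC'def
  have hC' : ∀ m, |c m| * ρ ^ m ≤ C' := by
    intro m
    have h1 := hC (Set.mem_range_self m)
    rw [abs_mul, abs_pow, abs_of_pos hρ] at h1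
    have : C ≤ |C| := le_abs_self C
    simp only [hC'def]
    linarith
  have hCpos : (0:ℝ) < C' := by positivity
  -- main bound for t ∈ (0, ρ/2)
  have key : ∀ t ∈ Set.Ioo (0:ℝ) (ρ/2), |f t / t ^ k - c k| ≤ (2 * C' / ρ ^ (k+1)) * t := by
    intro t ⟨ht0, htρ⟩
    have htρ' : t < ρ := by linarith
    have htδ : t < δ := by linarith
    have hsum := h t ⟨ht0, htδ⟩
    -- tail
    have htail : HasSum (fun m => c (m + (k+1)) * t ^ (m + (k+1)))
        (f t - ∑ i ∈ Finset.range (k+1), c i * t ^ i) :=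
      (hasSum_nat_add_iff' (f := fun m => c m * t ^ m) (k+1)).2 hsum
    have hfront : ∑ i ∈ Finset.range (k+1), c i * t ^ i = c k * t ^ k := by
      rw [Finset.sum_eq_single k]
      · intro b hb hbk
        have : b < k := by simp at hb; omega
        simp [hc b this]
      · simp
    rw [hfront] at htail
    -- bound the tail
    have hq : t / ρ < 1 := by rw [div_lt_one hρ]; linarith
    have hq0 : 0 ≤ t / ρ := by positivity
    have hbound : ∀ m : ℕ, |c (m + (k+1)) * t ^ (m + (k+1))|
        ≤ (C' * (t/ρ) ^ (k+1)) * (t/ρ) ^ m := by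
      intro m
      rw [abs_mul, abs_pow, abs_of_pos ht0]
      have h1 : |c (m + (k+1))| * t ^ (m + (k+1))
          ≤ (C' / ρ ^ (m + (k+1))) * t ^ (m + (k+1)) := by
        have := hC' (m + (k+1))
        have hρpow : (0:ℝ) < ρ ^ (m + (k+1)) := pow_pos hρ _
        have : |c (m + (k+1))| ≤ C' / ρ ^ (m + (k+1)) := by
          rw [le_div_iff₀ hρpow]; exact this
        exact mul_le_mul_of_nonneg_right this (by positivity)
      calc |c (m + (k+1))| * t ^ (m + (k+1)) ≤ (C' / ρ ^ (m + (k+1))) * t ^ (m + (k+1)) := h1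
        _ = (C' * (t/ρ) ^ (k+1)) * (t/ρ) ^ m := by
            rw [div_pow, div_pow, pow_add t m (k+1), pow_add ρ m (k+1)]
            have h2 : ρ ^ m ≠ 0 := by positivity
            have h3 : ρ ^ (k+1) ≠ 0 := by positivity
            field_simp
    have hgeo : Summable (fun m : ℕ => (C' * (t/ρ) ^ (k+1)) * (t/ρ) ^ m) :=
      (summable_geometric_of_lt_one hq0 hq).mul_left _
    have htail_bound : |f t - c k * t ^ k|
        ≤ (C' * (t/ρ) ^ (k+1)) * (1 - t/ρ)⁻¹ := by
      have h1 : |f t - c k * t ^ k| ≤ ∑' m, |c (m + (k+1)) * t ^ (m + (k+1))| := by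
        have hsummable : Summable (fun m => |c (m + (k+1)) * t ^ (m + (k+1))|) :=
          Summable.of_nonneg_of_le (fun m => abs_nonneg _) hbound hgeo
        calc |f t - c k * t ^ k| = |∑' m, c (m + (k+1)) * t ^ (m + (k+1))| := by
              rw [htail.tsum_eq]
          _ ≤ ∑' m, |c (m + (k+1)) * t ^ (m + (k+1))| := by
              have := norm_tsum_le_tsum_norm (f := fun m => c (m + (k+1)) * t ^ (m + (k+1)))
                (by simpa only [Real.norm_eq_abs] using hsummable)
              simpa only [Real.norm_eq_abs] using this
        
      have h2 : ∑' m, |c (m + (k+1)) * t ^ (m + (k+1))|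
          ≤ ∑' m : ℕ, (C' * (t/ρ) ^ (k+1)) * (t/ρ) ^ m := by
        refine Summable.tsum_le_tsum hbound ?_ hgeo
        exact Summable.of_nonneg_of_le (fun m => abs_nonneg _) hbound hgeo
      have h3 : ∑' m : ℕ, (C' * (t/ρ) ^ (k+1)) * (t/ρ) ^ m
          = (C' * (t/ρ) ^ (k+1)) * (1 - t/ρ)⁻¹ := by
        rw [tsum_mul_left, tsum_geometric_of_lt_one hq0 hq]
      linarith
    -- convert to the statement
    have hinv : (1 - t/ρ)⁻¹ ≤ 2 := by
      have h1 : t / ρ ≤ 1/2 := by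
        rw [div_le_iff₀ hρ]
        linarith
      have h2 : (0:ℝ) < 1 - t/ρ := by linarith
      rw [inv_le_comm₀ h2 (by norm_num)]
      linarith
    have htk : (0:ℝ) < t ^ k := pow_pos ht0 k
    rw [abs_sub_comm, ← abs_sub_comm (f t)] at htail_bound
    have habs : |f t / t ^ k - c k| = |f t - c k * t ^ k| / t ^ k := by
      have heq2 : f t / t ^ k - c k = (f t - c k * t ^ k) / t ^ k := by field_simp
      rw [heq2, abs_div, abs_of_pos htk]
    rw [habs, div_le_iff₀ htk]
    have hfinal : (C' * (t/ρ) ^ (k+1)) * (1 - t/ρ)⁻¹ ≤ 2 * C' / ρ ^ (k+1) * t * t ^ k := by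
      have hnn : (0:ℝ) ≤ C' * (t/ρ) ^ (k+1) := by positivity
      calc (C' * (t/ρ) ^ (k+1)) * (1 - t/ρ)⁻¹ ≤ (C' * (t/ρ) ^ (k+1)) * 2 :=
            mul_le_mul_of_nonneg_left hinv hnn
        _ = 2 * C' / ρ ^ (k+1) * t * t ^ k := by
            rw [div_pow, pow_succ]
            field_simp
    linarith
  -- conclude via squeeze
  have hev : ∀ᶠ t in 𝓝[>] (0:ℝ), |f t / t ^ k - c k| ≤ (2 * C' / ρ ^ (k+1)) * t := by
    filter_upwards [Ioo_mem_nhdsGT_of_mem (by constructor <;> [rfl; positivity] :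
      (0:ℝ) ∈ Set.Ico 0 (ρ/2))] with t ht using key t ht
  have hlim : Tendsto (fun t : ℝ => (2 * C' / ρ ^ (k+1)) * t) (𝓝[>] (0:ℝ)) (𝓝 0) := by
    have : Tendsto (fun t : ℝ => (2 * C' / ρ ^ (k+1)) * t) (𝓝 (0:ℝ)) (𝓝 0) := by
      simpa using (tendsto_id.const_mul (2 * C' / ρ ^ (k+1)) : Tendsto _ (𝓝 (0:ℝ)) _)
    exact this.mono_left nhdsWithin_le_nhds
  have : Tendsto (fun t => f t / t ^ k - c k) (𝓝[>] (0:ℝ)) (𝓝 0) := by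
    refine squeeze_zero_norm' ?_ hlim
    simpa [Real.norm_eq_abs] using hev
  have := this.add (tendsto_const_nhds (x := c k))
  simpa using this


lemma coeff_eq_zero {c : ℕ → ℝ} {δ : ℝ} (hδ : 0 < δ)
    (h : ∀ t ∈ Set.Ioo (0:ℝ) δ, HasSum (fun m => c m * t ^ m) 0) :
    ∀ m, c m = 0 := by
  intro m
  induction m using Nat.strong_induction_on with
  | _ m ih =>
    have h1 := coeff_tendsto hδ (f := fun _ => 0) h m (fun j hj => ih j hj)
    have h2 : Tendsto (fun t : ℝ => (0:ℝ) / t ^ m) (𝓝[>] (0:ℝ)) (𝓝 0) := by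
      simpa using tendsto_const_nhds (x := (0:ℝ)) (f := 𝓝[>] (0:ℝ))
    exact tendsto_nhds_unique h1 h2

section Lagrange

variable {n : ℕ} (hn : 0 < n) (μ : Fin n → ℝ) (hμpos : ∀ i, 0 < μ i)
  (hμinj : Function.Injective μ)

include hn hμpos hμinj in
lemma claimA : ∀ x : ℝ, ∑ j, (∏ i ∈ univ.erase j, μ j / (μ j - μ i)) *
    ∏ i ∈ univ.erase j, (1 - μ i * x) = 1 := by
  intro x
  have hne : ∀ i, μ i ≠ 0 := fun i => (hμpos i).ne'
  set v : Fin n → ℝ := fun i => (μ i)⁻¹ with hv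
  have hvinj : Set.InjOn v (univ : Finset (Fin n)) := by
    intro i _ j _ hij
    exact hμinj (by rwa [hv, inv_inj] at hij)
  have huniv : (univ : Finset (Fin n)).Nonempty := univ_nonempty_iff.mpr ⟨⟨0, hn⟩⟩
  have hsum := Lagrange.sum_basis hvinj huniv
  have heval := congrArg (Polynomial.eval x) hsum
  rw [Polynomial.eval_finset_sum, Polynomial.eval_one] at heval
  have hmain : ∑ j, (∏ i ∈ univ.erase j, μ j / (μ j - μ i)) *
      ∏ i ∈ univ.erase j, (1 - μ i * x)
      = ∑ j, Polynomial.eval x (Lagrange.basis univ v j) := by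
    refine Finset.sum_congr rfl fun j _ => ?_
    rw [Lagrange.basis, Polynomial.eval_prod, ← Finset.prod_mul_distrib]
    refine Finset.prod_congr rfl fun i hi => ?_
    have hij : i ≠ j := (Finset.mem_erase.mp hi).1
    have hsub : μ j - μ i ≠ 0 := sub_ne_zero.mpr (fun hc => hij (hμinj hc).symm)
    have hsubv : v j - v i ≠ 0 := by
      rw [hv]
      simp only
      rw [sub_ne_zero]
      exact fun hc => hij (hμinj (inv_inj.mp hc)).symm
    rw [Lagrange.basisDivisor, Polynomial.eval_mul, Polynomial.eval_C,
      Polynomial.eval_sub, Polynomial.eval_X, Polynomial.eval_C]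
    rw [hv]
    simp only
    have hij' : μ i - μ j ≠ 0 := sub_ne_zero.mpr (fun hc => hij (hμinj hc))
    have hkey : (μ j)⁻¹ - (μ i)⁻¹ = (μ i - μ j) / (μ i * μ j) := by
      rw [inv_sub_inv (hne j) (hne i), mul_comm (μ j) (μ i)]
    rw [hkey, inv_div]
    rw [div_mul_eq_mul_div, div_mul_eq_mul_div, div_eq_div_iff hsub hij']
    field_simp [hne i, hne j]
    ring
  rw [hmain, heval]

end Lagrange

section Moments

variable {n : ℕ} (hn : 0 < n) (μ : Fin n → ℝ) (hμpos : ∀ i, 0 < μ i)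
  (hμinj : Function.Injective μ)

include hn hμpos hμinj in
lemma partial_fractions {x : ℝ} (hx : ∀ i, 1 - μ i * x ≠ 0) :
    ∑ j, (∏ i ∈ univ.erase j, μ j / (μ j - μ i)) * (1 - μ j * x)⁻¹
      = ∏ i, (1 - μ i * x)⁻¹ := by
  have hA := claimA hn μ hμpos hμinj x
  have hprodne : (∏ i, (1 - μ i * x)) ≠ 0 := Finset.prod_ne_zero_iff.mpr fun i _ => hx i
  have key : ∀ j : Fin n, (∏ i ∈ univ.erase j, (1 - μ i * x)) * (∏ i, (1 - μ i * x))⁻¹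
      = (1 - μ j * x)⁻¹ := by
    intro j
    have hsplit : (∏ i, (1 - μ i * x)) = (1 - μ j * x) * ∏ i ∈ univ.erase j, (1 - μ i * x) :=
      (Finset.mul_prod_erase univ _ (mem_univ j)).symm
    have hene : (∏ i ∈ univ.erase j, (1 - μ i * x)) ≠ 0 := by
      rw [hsplit] at hprodne
      exact right_ne_zero_of_mul hprodne
    rw [hsplit, mul_inv, ← mul_assoc, mul_comm _ ((1 - μ j * x)⁻¹), mul_assoc,
      mul_inv_cancel₀ hene, mul_one]
  calc ∑ j, (∏ i ∈ univ.erase j, μ j / (μ j - μ i)) * (1 - μ j * x)⁻¹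
      = ∑ j, ((∏ i ∈ univ.erase j, μ j / (μ j - μ i)) * ∏ i ∈ univ.erase j, (1 - μ i * x))
          * (∏ i, (1 - μ i * x))⁻¹ := by
        refine Finset.sum_congr rfl fun j _ => ?_
        rw [mul_assoc, key j]
    _ = (∑ j, (∏ i ∈ univ.erase j, μ j / (μ j - μ i)) * ∏ i ∈ univ.erase j, (1 - μ i * x))
          * (∏ i, (1 - μ i * x))⁻¹ := by rw [Finset.sum_mul]
    _ = ∏ i, (1 - μ i * x)⁻¹ := by rw [hA, one_mul, ← Finset.prod_inv_distrib]

include hn hμpos hμinj in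
lemma T_eq_Hh : ∀ m, ∑ j, (∏ i ∈ univ.erase j, μ j / (μ j - μ i)) * μ j ^ m
    = Hh (List.ofFn μ) m := by
  set B := ∑ i, μ i with hB
  have hBpos : 0 < B := Finset.sum_pos (fun i _ => hμpos i) (univ_nonempty_iff.mpr ⟨⟨0, hn⟩⟩)
  have hle : ∀ i, μ i ≤ B := fun i => Finset.single_le_sum (fun i _ => (hμpos i).le) (mem_univ i)
  have hδ : (0:ℝ) < B⁻¹ := by positivity
  have hcoeff : ∀ x ∈ Set.Ioo (0:ℝ) B⁻¹,
      HasSum (fun m => ((∑ j, (∏ i ∈ univ.erase j, μ j / (μ j - μ i)) * μ j ^ m)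
        - Hh (List.ofFn μ) m) * x ^ m) 0 := by
    intro x ⟨hx0, hxB⟩
    have hxlt : ∀ i, μ i * x < 1 := by
      intro i
      have h1 : μ i * x < μ i * B⁻¹ := by
        exact mul_lt_mul_of_pos_left hxB (hμpos i)
      have h2 : μ i * B⁻¹ ≤ 1 := by
        rw [← le_div_iff₀ hδ]
        simpa using hle i
      linarith
    have hxne : ∀ i, 1 - μ i * x ≠ 0 := fun i => by have := hxlt i; intro hc; linarith
    -- LHS geometric sums
    have hLHS : HasSum (fun m => (∑ j, (∏ i ∈ univ.erase j, μ j / (μ j - μ i)) * μ j ^ m) * x ^ m)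
        (∑ j, (∏ i ∈ univ.erase j, μ j / (μ j - μ i)) * (1 - μ j * x)⁻¹) := by
      have each : ∀ j : Fin n, HasSum
          (fun m => (∏ i ∈ univ.erase j, μ j / (μ j - μ i)) * (μ j * x) ^ m)
          ((∏ i ∈ univ.erase j, μ j / (μ j - μ i)) * (1 - μ j * x)⁻¹) := by
        intro j
        exact (hasSum_geometric_of_lt_one (mul_nonneg (hμpos j).le hx0.le) (hxlt j)).mul_left _
      have := hasSum_sum (fun j (_ : j ∈ (univ : Finset (Fin n))) => each j)
      refine HasSum.congr_fun this ?_
      intro m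
      rw [Finset.sum_mul]
      refine Finset.sum_congr rfl fun j _ => ?_
      rw [mul_pow]
      ring
    -- RHS product
    have hRHS : HasSum (fun m => Hh (List.ofFn μ) m * x ^ m) (∏ i, (1 - μ i * x)⁻¹) := by
      have h1 := hasSum_Hh (L := List.ofFn μ)
        (fun c hc => by obtain ⟨i, rfl⟩ := List.mem_ofFn.mp hc; exact hμpos i) hx0.le
        (fun c hc => by obtain ⟨i, rfl⟩ := List.mem_ofFn.mp hc; exact hxlt i)
      rwa [List.map_ofFn, List.prod_ofFn] at h1
    have hEq := partial_fractions hn μ hμpos hμinj hxne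
    have := hLHS.sub hRHS
    rw [hEq, sub_self] at this
    refine HasSum.congr_fun this ?_
    intro m
    ring
  intro m
  have := coeff_eq_zero hδ hcoeff m
  linarith [this]

end Moments

lemma Hh_gt_sum_pow' {L : List ℝ} (hL : ∀ x ∈ L, 0 < x) (hlen : 2 ≤ L.length)
    {m : ℕ} (hm : 2 ≤ m) : (L.map (· ^ m)).sum < Hh L m := by
  match L, hlen with
  | c :: c' :: L', _ => exact Hh_gt_sum_pow hL (by simp) hm

/-- Key functional-equation step in the proof of Theorem 1. Let `μ₁ > ⋯ > μₙ > 0` (`n ≥ 2`) with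
Lagrange weights `ℓⱼ = ∏_{i ≠ j} μⱼ/(μⱼ - μᵢ)`, and let `ψ(t) = ∑_{k=0}^∞ aₖ tᵏ` be a power
series convergent in a neighborhood of `0` with `a₀ = 1` and `a₁ > 0`. If
`1 = ∑_{j=1}^n ℓⱼ ∏_{i ≠ j} ψ(μᵢ t)` for all `t` in a neighborhood of `0`, then `aₖ = 0` for
all `k ≥ 2`; that is, `ψ(t) = 1 + a₁ t`. -/
theorem functional_equation_forces_affine
    (n : ℕ) (hn : 2 ≤ n)
    (μ : Fin n → ℝ) (hμpos : ∀ i, 0 < μ i) (hμanti : StrictAnti μ)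
    (a : ℕ → ℝ) (ψ : ℝ → ℝ)
    (r : ℝ) (hr : 0 < r)
    (hψ : ∀ t ∈ Set.Ioo (-r) r, HasSum (fun k => a k * t ^ k) (ψ t))
    (ha0 : a 0 = 1) (ha1 : 0 < a 1)
    (ε : ℝ) (hε : 0 < ε)
    (heq : ∀ t ∈ Set.Ioo (-ε) ε,
      (1 : ℝ) = ∑ j, (∏ i ∈ univ.erase j, μ j / (μ j - μ i)) *
        ∏ i ∈ univ.erase j, ψ (μ i * t)) :
    ∀ k, 2 ≤ k → a k = 0 := by
  have hn0 : 0 < n := by omega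
  have hμinj : Function.Injective μ := hμanti.injective
  intro k
  induction k using Nat.strong_induction_on with
  | _ k ih =>
  intro hk
  have hk0 : k ≠ 0 := by omega
  have hk1 : k ≠ 1 := by omega
  -- Step A: per-factor limits
  have stepA : ∀ i : Fin n, Tendsto
      (fun t => (ψ (μ i * t) - (1 + a 1 * (μ i * t))) / t ^ k)
      (𝓝[>] (0:ℝ)) (𝓝 (a k * μ i ^ k)) := by
    intro i
    set c' : ℕ → ℝ := fun m => if m = 0 then 0 else if m = 1 then 0 else a m * μ i ^ m with hc'
    have hδi : (0:ℝ) < r / μ i := div_pos hr (hμpos i)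
    have hsum : ∀ t ∈ Set.Ioo (0:ℝ) (r / μ i),
        HasSum (fun m => c' m * t ^ m) (ψ (μ i * t) - (1 + a 1 * (μ i * t))) := by
      intro t ⟨ht0, htr⟩
      have hμt : μ i * t ∈ Set.Ioo (-r) r := by
        constructor
        · have : (0:ℝ) < μ i * t := mul_pos (hμpos i) ht0
          linarith
        · have := (lt_div_iff₀ (hμpos i)).mp htr
          linarith [this]
      have h1 := hψ (μ i * t) hμt
      set q : ℕ → ℝ := fun m => if m = 0 then 1 else if m = 1 then a 1 * μ i else 0 with hq
      have h2 : HasSum (fun m => q m * t ^ m) (1 + a 1 * (μ i * t)) := by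
        have hvanish : ∀ m ∉ ({0, 1} : Finset ℕ), q m * t ^ m = 0 := by
          intro m hm
          simp only [Finset.mem_insert, Finset.mem_singleton] at hm
          push_neg at hm
          simp [hq, hm.1, hm.2]
        have := (hasSum_sum_of_ne_finset_zero hvanish : HasSum (fun m => q m * t ^ m) _)
        have hval : ∑ m ∈ ({0, 1} : Finset ℕ), q m * t ^ m = 1 + a 1 * (μ i * t) := by
          rw [Finset.sum_pair (by norm_num : (0:ℕ) ≠ 1)]
          simp [hq]
          ring
        rwa [hval] at this
      have h3 := h1.sub h2
      refine HasSum.congr_fun h3 ?_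
      intro m
      match m with
      | 0 => simp [hc', hq, ha0]
      | 1 => simp [hc', hq]; ring
      | (m+2) => simp [hc', hq, mul_pow]; ring
    have hczero : ∀ m < k, c' m = 0 := by
      intro m hm
      match m with
      | 0 => simp [hc']
      | 1 => simp [hc']
      | (m+2) =>
          have h0 := ih (m+2) hm (by omega)
          simp [hc', h0]
    have := coeff_tendsto hδi hsum k hczero
    have hck : c' k = a k * μ i ^ k := by simp [hc', hk0, hk1]
    rwa [hck] at this
  -- limits of ψ itself and of the affine products
  have htk : Tendsto (fun t : ℝ => t ^ k) (𝓝[>] (0:ℝ)) (𝓝 0) := by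
    have h1 : Tendsto (fun t : ℝ => t ^ k) (𝓝 (0:ℝ)) (𝓝 ((0:ℝ) ^ k)) :=
      (continuous_pow k).tendsto 0
    rw [zero_pow hk0] at h1
    exact h1.mono_left nhdsWithin_le_nhds
  have ψlim : ∀ i : Fin n, Tendsto (fun t => ψ (μ i * t)) (𝓝[>] (0:ℝ)) (𝓝 1) := by
    intro i
    have hlin : Tendsto (fun t : ℝ => 1 + a 1 * (μ i * t)) (𝓝[>] (0:ℝ)) (𝓝 1) := by
      have : Continuous fun t : ℝ => 1 + a 1 * (μ i * t) := by continuity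
      have h2 := this.tendsto 0
      simp only [mul_zero, add_zero] at h2
      exact h2.mono_left nhdsWithin_le_nhds
    have hmain := ((stepA i).mul htk).add hlin
    rw [mul_zero, zero_add] at hmain
    refine hmain.congr' ?_
    filter_upwards [self_mem_nhdsWithin] with t (ht : (0:ℝ) < t)
    have htkne : t ^ k ≠ 0 := by positivity
    field_simp
    ring
  have hylim : ∀ s : Finset (Fin n), Tendsto (fun t => ∏ i ∈ s, (1 + a 1 * (μ i * t)))
      (𝓝[>] (0:ℝ)) (𝓝 1) := by
    intro s
    have hcont : Continuous fun t : ℝ => ∏ i ∈ s, (1 + a 1 * (μ i * t)) := by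
      refine continuous_finset_prod s fun i _ => ?_
      continuity
    have h2 := hcont.tendsto 0
    simp only [mul_zero, add_zero, Finset.prod_const_one] at h2
    exact h2.mono_left nhdsWithin_le_nhds
  -- Step B: product limits
  have stepB : ∀ s : Finset (Fin n), Tendsto
      (fun t => ((∏ i ∈ s, ψ (μ i * t)) - ∏ i ∈ s, (1 + a 1 * (μ i * t))) / t ^ k)
      (𝓝[>] (0:ℝ)) (𝓝 (a k * ∑ i ∈ s, μ i ^ k)) := by
    intro s
    induction s using Finset.induction_on with
    | empty =>
        simp only [Finset.prod_empty, Finset.sum_empty, sub_self, zero_div, mul_zero]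
        exact tendsto_const_nhds
    | insert i s hi ihs =>
        have halg : ∀ t : ℝ,
            ((∏ j ∈ insert i s, ψ (μ j * t)) - ∏ j ∈ insert i s, (1 + a 1 * (μ j * t))) / t ^ k
            = ψ (μ i * t) * (((∏ j ∈ s, ψ (μ j * t)) - ∏ j ∈ s, (1 + a 1 * (μ j * t))) / t ^ k)
              + ((ψ (μ i * t) - (1 + a 1 * (μ i * t))) / t ^ k)
                  * ∏ j ∈ s, (1 + a 1 * (μ j * t)) := by
          intro t
          rw [Finset.prod_insert hi, Finset.prod_insert hi]
          have hid : ψ (μ i * t) * (∏ j ∈ s, ψ (μ j * t))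
              - (1 + a 1 * (μ i * t)) * ∏ j ∈ s, (1 + a 1 * (μ j * t))
              = ψ (μ i * t) * ((∏ j ∈ s, ψ (μ j * t)) - ∏ j ∈ s, (1 + a 1 * (μ j * t)))
                + (ψ (μ i * t) - (1 + a 1 * (μ i * t))) * ∏ j ∈ s, (1 + a 1 * (μ j * t)) := by
            ring
          rw [hid, add_div, mul_div_assoc, mul_div_right_comm]
        have hlim := ((ψlim i).mul ihs).add ((stepA i).mul (hylim s))
        have hval : (1 : ℝ) * (a k * ∑ j ∈ s, μ j ^ k) + (a k * μ i ^ k) * 1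
            = a k * ∑ j ∈ insert i s, μ j ^ k := by
          rw [Finset.sum_insert hi]
          ring
        rw [hval] at hlim
        exact Tendsto.congr (fun t => (halg t).symm) hlim
  -- Step C: the functional equation kills the limit
  have hstepC : Tendsto (fun t => ∑ j, (∏ i ∈ univ.erase j, μ j / (μ j - μ i)) *
        (((∏ i ∈ univ.erase j, ψ (μ i * t)) - ∏ i ∈ univ.erase j, (1 + a 1 * (μ i * t))) / t ^ k))
      (𝓝[>] (0:ℝ))
      (𝓝 (∑ j, (∏ i ∈ univ.erase j, μ j / (μ j - μ i)) *
        (a k * ∑ i ∈ univ.erase j, μ i ^ k))) := by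
    refine tendsto_finset_sum _ fun j _ => ?_
    exact (stepB (univ.erase j)).const_mul _
  have hG : ∀ t : ℝ, ∑ j, (∏ i ∈ univ.erase j, μ j / (μ j - μ i)) *
      ∏ i ∈ univ.erase j, (1 + a 1 * (μ i * t)) = 1 := by
    intro t
    have hA := claimA hn0 μ hμpos hμinj (-(a 1 * t))
    have hcongr : ∑ j, (∏ i ∈ univ.erase j, μ j / (μ j - μ i)) *
        ∏ i ∈ univ.erase j, (1 + a 1 * (μ i * t))
        = ∑ j, (∏ i ∈ univ.erase j, μ j / (μ j - μ i)) *
          ∏ i ∈ univ.erase j, (1 - μ i * -(a 1 * t)) := by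
      refine Finset.sum_congr rfl fun j _ => ?_
      congr 1
      refine Finset.prod_congr rfl fun i _ => ?_
      ring
    rw [hcongr, hA]
  have hzero : (fun t => ∑ j, (∏ i ∈ univ.erase j, μ j / (μ j - μ i)) *
        (((∏ i ∈ univ.erase j, ψ (μ i * t)) - ∏ i ∈ univ.erase j, (1 + a 1 * (μ i * t))) / t ^ k))
      =ᶠ[𝓝[>] (0:ℝ)] fun _ => 0 := by
    filter_upwards [Ioo_mem_nhdsGT_of_mem
      (⟨le_refl (0:ℝ), hε⟩ : (0:ℝ) ∈ Set.Ico (0:ℝ) ε)] with t ht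
    have htε : t ∈ Set.Ioo (-ε) ε := ⟨by linarith [ht.1], ht.2⟩
    have h1 := (heq t htε).symm
    have h2 := hG t
    calc ∑ j, (∏ i ∈ univ.erase j, μ j / (μ j - μ i)) *
          (((∏ i ∈ univ.erase j, ψ (μ i * t)) - ∏ i ∈ univ.erase j, (1 + a 1 * (μ i * t))) / t ^ k)
        = ((∑ j, (∏ i ∈ univ.erase j, μ j / (μ j - μ i)) * ∏ i ∈ univ.erase j, ψ (μ i * t))
            - ∑ j, (∏ i ∈ univ.erase j, μ j / (μ j - μ i)) *
              ∏ i ∈ univ.erase j, (1 + a 1 * (μ i * t))) / t ^ k := by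
          rw [← Finset.sum_sub_distrib, Finset.sum_div]
          refine Finset.sum_congr rfl fun j _ => ?_
          rw [← mul_sub, mul_div_assoc]
      _ = 0 := by rw [h1, h2, sub_self, zero_div]
  have hkey : ∑ j, (∏ i ∈ univ.erase j, μ j / (μ j - μ i)) *
      (a k * ∑ i ∈ univ.erase j, μ i ^ k) = 0 := by
    have h2 : Tendsto (fun _ : ℝ => (0:ℝ)) (𝓝[>] (0:ℝ)) (𝓝 0) := tendsto_const_nhds
    exact tendsto_nhds_unique (hstepC.congr' hzero) h2
  -- Step D: algebra
  have hℓ1 : ∑ j, (∏ i ∈ univ.erase j, μ j / (μ j - μ i)) = 1 := by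
    have := claimA hn0 μ hμpos hμinj 0
    simpa using this
  have hT := T_eq_Hh hn0 μ hμpos hμinj k
  have hcomp : ∑ j, (∏ i ∈ univ.erase j, μ j / (μ j - μ i)) *
      (a k * ∑ i ∈ univ.erase j, μ i ^ k)
      = a k * ((∑ i, μ i ^ k) - Hh (List.ofFn μ) k) := by
    calc ∑ j, (∏ i ∈ univ.erase j, μ j / (μ j - μ i)) * (a k * ∑ i ∈ univ.erase j, μ i ^ k)
        = ∑ j, (a k * (∑ i, μ i ^ k) * (∏ i ∈ univ.erase j, μ j / (μ j - μ i))
            - a k * ((∏ i ∈ univ.erase j, μ j / (μ j - μ i)) * μ j ^ k)) := by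
          refine Finset.sum_congr rfl fun j _ => ?_
          rw [Finset.sum_erase_eq_sub (mem_univ j)]
          ring
      _ = a k * (∑ i, μ i ^ k) * (∑ j, (∏ i ∈ univ.erase j, μ j / (μ j - μ i)))
            - a k * (∑ j, (∏ i ∈ univ.erase j, μ j / (μ j - μ i)) * μ j ^ k) := by
          rw [Finset.sum_sub_distrib, ← Finset.mul_sum, ← Finset.mul_sum]
      _ = a k * ((∑ i, μ i ^ k) - Hh (List.ofFn μ) k) := by
          rw [hℓ1, hT]
          ring
  have hlt : (∑ i, μ i ^ k) < Hh (List.ofFn μ) k := by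
    have h1 := Hh_gt_sum_pow' (L := List.ofFn μ)
      (fun x hx => by obtain ⟨i, rfl⟩ := List.mem_ofFn.mp hx; exact hμpos i)
      (by rw [List.length_ofFn]; exact hn) (m := k) hk
    rwa [List.map_ofFn, List.sum_ofFn] at h1
  rw [hcomp] at hkey
  rcases mul_eq_zero.mp hkey with h | h
  · exact h
  · exfalso
    have : (∑ i, μ i ^ k) ≠ Hh (List.ofFn μ) k := ne_of_lt hlt
    exact this (by linarith)
end
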